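/- Kruskal's uniqueness theorem: Let 𝒳 be a third-order tensor with CP decomposition in factor matrices A⁽¹⁾ ∈ ℂ^{I×R}, A⁽²⁾ ∈ ℂ^{J×R}, A⁽³⁾ ∈ ℂ^{K×R}. If k_{A⁽¹⁾} + k_{A⁽²⁾} + k_{A⁽³⁾} ≥ 2R + 2, then the rank-R CP decomposition of 𝒳 is unique up to simultaneous column permutation and scaling (with scalings multiplying to one across the three factors). -/

import Mathlib

set_option maxHeartbeats 1000000
set_option linter.unusedSectionVars false
set_option linter.unusedVariables false


open Matrix

/-- The Kruskal rank of a matrix: the largest `k` (with `k ≤ n`) such that every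
subset of `k` columns is linearly independent. -/
noncomputable def kruskalRank {m n : ℕ} (A : Matrix (Fin m) (Fin n) ℂ) : ℕ :=
  sSup {k | k ≤ n ∧ ∀ s : Finset (Fin n), s.card = k →
    LinearIndependent ℂ (fun i : s => fun p => A p (i : Fin n))}

open Finset Submodule Module

namespace KruskalAux

/-- every subset of size ≤ k of the family is linearly independent -/
def KLI {V : Type*} [AddCommGroup V] [Module ℂ V] {R : ℕ} (v : Fin R → V) (k : ℕ) : Prop :=
  ∀ s : Finset (Fin R), s.card ≤ k → LinearIndependent ℂ (fun i : s => v i)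

variable {V : Type*} [AddCommGroup V] [Module ℂ V]

lemma exists_dual_sep (W : Submodule ℂ V) {v : V} (hv : v ∉ W) :
    ∃ φ : Module.Dual ℂ V, (∀ w ∈ W, φ w = 0) ∧ φ v ≠ 0 := by
  have hv' : (Submodule.Quotient.mk v : V ⧸ W) ≠ 0 := by
    simpa [Submodule.Quotient.mk_eq_zero] using hv
  have h2 := (Module.forall_dual_apply_eq_zero_iff ℂ (Submodule.Quotient.mk v : V ⧸ W)).not
  rw [not_forall] at h2
  obtain ⟨ψ, hψ⟩ := h2.mpr hv'
  refine ⟨ψ.comp W.mkQ, fun w hw => ?_, hψ⟩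
  have : (Submodule.Quotient.mk w : V ⧸ W) = 0 := (Submodule.Quotient.mk_eq_zero W).2 hw
  simp [Submodule.mkQ_apply, this]

lemma mem_of_forall_dual {W : Submodule ℂ V} {v : V}
    (h : ∀ φ : Module.Dual ℂ V, (∀ w ∈ W, φ w = 0) → φ v = 0) : v ∈ W := by
  by_contra hv
  obtain ⟨φ, h1, h2⟩ := exists_dual_sep W hv
  exact h2 (h φ h1)

/-- a functional vanishing on `W` and nonzero on finitely many targets outside `W`. -/
lemma exists_dual_generic (W : Submodule ℂ V) (ts : Finset V)
    (h : ∀ x ∈ ts, x ∉ W) :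
    ∃ φ : Module.Dual ℂ V, (∀ w ∈ W, φ w = 0) ∧ ∀ x ∈ ts, φ x ≠ 0 := by
  classical
  induction ts using Finset.induction with
  | empty => exact ⟨0, by simp, by simp⟩
  | @insert a s ha ih =>
    obtain ⟨φ, hφW, hφs⟩ := ih (fun x hx => h x (Finset.mem_insert_of_mem hx))
    obtain ⟨ψ, hψW, hψa⟩ := exists_dual_sep W (h a (Finset.mem_insert_self a s))
    set B : Finset ℂ := (insert a s).image (fun x => -φ x / ψ x) with hB
    obtain ⟨t, ht⟩ := Infinite.exists_notMem_finset B
    refine ⟨φ + t • ψ, fun w hw => by simp [hφW w hw, hψW w hw], ?_⟩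
    intro x hx
    simp only [LinearMap.add_apply, LinearMap.smul_apply, smul_eq_mul]
    intro hzero
    by_cases hz : ψ x = 0
    · rcases Finset.mem_insert.1 hx with rfl | hxs
      · exact hψa hz
      · exact hφs x hxs (by simpa [hz] using hzero)
    · apply ht
      rw [hB]
      refine Finset.mem_image.2 ⟨x, hx, ?_⟩
      have : t = -φ x / ψ x := by field_simp; linear_combination hzero
      exact this.symm
  

lemma li_restrict {R : ℕ} {v : Fin R → V} {s t : Finset (Fin R)} (hst : s ⊆ t)
    (h : LinearIndependent ℂ (fun i : t => v i)) : LinearIndependent ℂ (fun i : s => v i) :=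
  h.comp (fun i => ⟨i.1, hst i.2⟩)
    (fun a b hab => Subtype.ext (by simpa using congrArg Subtype.val hab))

lemma li_sum_eq_zero {R : ℕ} {v : Fin R → V} {s : Finset (Fin R)}
    (h : LinearIndependent ℂ (fun i : s => v i)) {g : Fin R → ℂ}
    (hsum : ∑ r ∈ s, g r • v r = 0) : ∀ r ∈ s, g r = 0 := by
  have h2 := Fintype.linearIndependent_iff.1 h (fun i => g i)
  have h3 : ∑ i : s, g i • v i = 0 := by
    rw [Finset.sum_coe_sort s (fun r => g r • v r)]; exact hsum
  intro r hr
  exact h2 h3 ⟨r, hr⟩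

lemma KLI.nonzero {R : ℕ} {v : Fin R → V} {k : ℕ} (h : KLI v k) (hk : 1 ≤ k) (r : Fin R) :
    v r ≠ 0 := by
  have := h {r} (by simpa using hk)
  exact this.ne_zero ⟨r, Finset.mem_singleton_self r⟩

lemma KLI.not_parallel {R : ℕ} {v : Fin R → V} {k : ℕ} (h : KLI v k) (hk : 2 ≤ k)
    {r r' : Fin R} (hne : r ≠ r') {γ : ℂ} (heq : v r' = γ • v r) : False := by
  classical
  have hcard : ({r', r} : Finset (Fin R)).card ≤ k := by
    refine le_trans (Finset.card_insert_le _ _) ?_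
    simpa using hk
  have hli := h _ hcard
  have hr'm : r' ∈ ({r', r} : Finset (Fin R)) := Finset.mem_insert_self _ _
  have hsum : ∑ x ∈ ({r', r} : Finset (Fin R)),
      (fun x => if x = r' then (-1 : ℂ) else γ) x • v x = 0 := by
    rw [Finset.sum_insert (by simp [Ne.symm hne] : r' ∉ ({r} : Finset (Fin R)))]
    simp [hne, hne.symm, heq]
  have := li_sum_eq_zero hli hsum r' hr'm
  simp at this

variable [FiniteDimensional ℂ V]

lemma card_le_finrank {R : ℕ} {v : Fin R → V} {s : Finset (Fin R)} {W : Submodule ℂ V}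
    (h : LinearIndependent ℂ (fun i : s => v i)) (hmem : ∀ r ∈ s, v r ∈ W) :
    s.card ≤ finrank ℂ W := by
  have h2 : LinearIndependent ℂ (fun i : s => (⟨v i, hmem i i.2⟩ : W)) := by
    apply LinearIndependent.of_comp W.subtype
    exact h
  simpa [Fintype.card_coe] using h2.fintype_card_le_finrank

lemma finrank_span_image_le {R : ℕ} (v : Fin R → V) (s : Finset (Fin R)) :
    finrank ℂ (span ℂ (v '' s)) ≤ s.card := by
  classical
  have h1 := finrank_span_finset_le_card (R := ℂ) (s.image v)
  rw [Set.finrank] at h1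
  rw [show (v '' ↑s : Set V) = ↑(s.image v) by simp [Finset.coe_image]]
  exact le_trans h1 (Finset.card_image_le)

lemma finrank_span_image_eq {R : ℕ} {v : Fin R → V} {s : Finset (Fin R)}
    (h : LinearIndependent ℂ (fun i : s => v i)) :
    finrank ℂ (span ℂ (v '' s)) = s.card := by
  have h1 := finrank_span_eq_card h
  rw [show Set.range (fun i : s => v i) = v '' ↑s from (Set.image_eq_range v ↑s).symm] at h1
  simpa [Fintype.card_coe] using h1

lemma not_mem_span_of_li {R : ℕ} {v : Fin R → V} {s : Finset (Fin R)} {r : Fin R}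
    (hr : r ∉ s) (h : LinearIndependent ℂ (fun i : (insert r s : Finset (Fin R)) => v i)) :
    v r ∉ span ℂ (v '' s) := by
  classical
  intro hmem
  have hrs : r ∈ (insert r s : Finset (Fin R)) := Finset.mem_insert_self _ _
  set s' : Set ((insert r s : Finset (Fin R)) : Type) :=
    {i | (i : Fin R) ∈ s} with hs'
  have hx : (⟨r, hrs⟩ : (insert r s : Finset (Fin R))) ∉ s' := by simp [hs', hr]
  have h2 := h.notMem_span_image (x := ⟨r, hrs⟩) (s := s') hx
  apply h2
  have himg : (fun i : (insert r s : Finset (Fin R)) => v i) '' s' = v '' ↑s := by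
    ext y
    constructor
    · rintro ⟨i, hi, rfl⟩; exact ⟨i, hi, rfl⟩
    · rintro ⟨a, ha, rfl⟩
      exact ⟨⟨a, Finset.mem_insert_of_mem ha⟩, by simpa [hs'] using ha, rfl⟩
  rw [himg]
  exact hmem

lemma finrank_span_union_le (A B : Set V) :
    finrank ℂ (span ℂ (A ∪ B)) ≤ finrank ℂ (span ℂ A) + finrank ℂ (span ℂ B) := by
  rw [Submodule.span_union]
  have h := Submodule.finrank_sup_add_finrank_inf_eq (span ℂ A) (span ℂ B)
  omega


lemma finrank_span_range_le {ι : Type*} [Fintype ι] (z : ι → V) :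
    finrank ℂ (span ℂ (Set.range z)) ≤ Fintype.card ι := by
  classical
  have h1 := finrank_span_finset_le_card (R := ℂ) (Finset.univ.image z)
  rw [Set.finrank] at h1
  rw [show Set.range z = ↑(Finset.univ.image z) by simp [Finset.coe_image]]
  exact le_trans h1 (le_trans Finset.card_image_le (by simp))

end KruskalAux

namespace KruskalAux

variable {V : Type*} [AddCommGroup V] [Module ℂ V]

lemma span_contain {nI R : ℕ}
    {u : Fin R → Fin nI → ℂ} {M : Fin R → V} {ι : Type*} [Fintype ι]
    {y : ι → Fin nI → ℂ} {z : ι → V}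
    {S T : Finset (Fin R)} (hTS : T ⊆ S)
    (hLI : LinearIndependent ℂ (fun p : (S \ T : Finset (Fin R)) => u p))
    (heq : ∀ ψ : Module.Dual ℂ V, ∀ i, ∑ p ∈ S, ψ (M p) * u p i = ∑ m, ψ (z m) * y m i) :
    ∀ p ∈ S, M p ∈ span ℂ (M '' ↑T ∪ Set.range z) := by
  classical
  have main : ∀ ψ : Module.Dual ℂ V, (∀ x ∈ span ℂ (M '' ↑T ∪ Set.range z), ψ x = 0) →
      ∀ p ∈ S, ψ (M p) = 0 := by
    intro ψ hψ
    have hz : ∀ m, ψ (z m) = 0 := fun m => hψ _ (subset_span (Or.inr ⟨m, rfl⟩))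
    have hT : ∀ t ∈ T, ψ (M t) = 0 := fun t ht => hψ _ (subset_span (Or.inl ⟨t, ht, rfl⟩))
    have key : ∀ q ∈ S \ T, ψ (M q) = 0 := by
      have hsum : ∑ q ∈ S \ T, (ψ (M q)) • u q = 0 := by
        funext i
        rw [show ((0 : Fin nI → ℂ) i) = 0 from rfl, Finset.sum_apply]
        have h1 := heq ψ i
        have hrhs : ∑ m, ψ (z m) * y m i = 0 :=
          Finset.sum_eq_zero (fun m _ => by rw [hz m, zero_mul])
        have h2 : ∑ p ∈ S, ψ (M p) * u p i = 0 := h1.trans hrhs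
        rw [← Finset.sum_sdiff hTS] at h2
        have h3 : ∑ t ∈ T, ψ (M t) * u t i = 0 :=
          Finset.sum_eq_zero (fun t ht => by rw [hT t ht, zero_mul])
        rw [h3, add_zero] at h2
        simpa [smul_eq_mul] using h2
      exact fun q hq => li_sum_eq_zero hLI hsum q hq
    intro p hp
    by_cases hpt : p ∈ T
    · exact hT p hpt
    · exact key p (Finset.mem_sdiff.2 ⟨hp, hpt⟩)
  intro p hp
  exact mem_of_forall_dual (fun ψ hψ => main ψ hψ p hp)

lemma GCcard {nI nJ R : ℕ} {u : Fin R → Fin nI → ℂ} {w : Fin R → Fin nJ → ℂ}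
    {ι : Type*} [Fintype ι] {y : ι → Fin nI → ℂ} {z : ι → Fin nJ → ℂ}
    {S : Finset (Fin R)} {lam : Fin R → ℂ} (hlam : ∀ r ∈ S, lam r ≠ 0)
    (heq : ∀ i j, ∑ r ∈ S, lam r * (u r i * w r j) = ∑ m, y m i * z m j)
    {p q : ℕ} (hp : 1 ≤ p)
    (hu : ∀ t : Finset (Fin R), t.card ≤ p → LinearIndependent ℂ (fun i : t => u i))
    (hw : ∀ t : Finset (Fin R), t.card ≤ q → LinearIndependent ℂ (fun i : t => w i)) :
    min q S.card ≤ (S.card - p) + Fintype.card ι := by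
  classical
  set M : Fin R → Fin nJ → ℂ := fun r => lam r • w r with hM
  obtain ⟨T, hTS, hTcard⟩ := Finset.exists_subset_card_eq (Nat.sub_le S.card p)
  have hsdcard : (S \ T).card ≤ p := by
    rw [Finset.card_sdiff_of_subset hTS, hTcard]; omega
  have hfun : ∀ ψ : Module.Dual ℂ (Fin nJ → ℂ), ∀ i,
      ∑ r ∈ S, ψ (M r) * u r i = ∑ m, ψ (z m) * y m i := by
    intro ψ i
    have hveq : ∑ r ∈ S, (lam r * u r i) • w r = ∑ m, (y m i) • z m := by
      funext j
      rw [Finset.sum_apply, Finset.sum_apply]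
      simpa [mul_assoc, mul_comm, mul_left_comm] using heq i j
    have := congrArg ψ hveq
    rw [map_sum, map_sum] at this
    simp only [LinearMap.map_smul, smul_eq_mul] at this
    calc ∑ r ∈ S, ψ (M r) * u r i = ∑ r ∈ S, (lam r * u r i) * ψ (w r) := by
          refine Finset.sum_congr rfl (fun r _ => ?_)
          rw [hM]; simp only [LinearMap.map_smul, smul_eq_mul]; ring
      _ = ∑ m, (y m i) * ψ (z m) := this
      _ = ∑ m, ψ (z m) * y m i := by refine Finset.sum_congr rfl (fun m _ => by ring)
  have hcont := span_contain hTS (hu _ hsdcard) hfun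
  set Z₀ := span ℂ (M '' ↑T ∪ Set.range z) with hZ
  have hwin : ∀ r ∈ S, w r ∈ Z₀ := by
    intro r hr
    have h1 : M r ∈ Z₀ := hcont r hr
    have h2 : w r = (lam r)⁻¹ • M r := by
      rw [hM]; simp [smul_smul, inv_mul_cancel₀ (hlam r hr)]
    rw [h2]; exact Z₀.smul_mem _ h1
  obtain ⟨S', hS'S, hS'card⟩ := Finset.exists_subset_card_eq (min_le_right q S.card)
  have hLIS' := hw S' (hS'card ▸ min_le_left q S.card)
  have hle1 : S'.card ≤ finrank ℂ Z₀ :=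
    card_le_finrank hLIS' (fun r hr => hwin r (hS'S hr))
  have hle2 : finrank ℂ Z₀ ≤ T.card + Fintype.card ι := by
    refine le_trans (finrank_span_union_le _ _) ?_
    exact add_le_add (finrank_span_image_le M T) (finrank_span_range_le z)
  omega

end KruskalAux


namespace KruskalAux

lemma perm_lemma {nK R : ℕ} {c c' : Fin R → Fin nK → ℂ} {k : ℕ}
    (hk2 : 2 ≤ k) (hkR : k ≤ R) (hc : KLI c k)
    (hdia : ∀ (W : Submodule ℂ (Fin nK → ℂ)) (s : Finset (Fin R)), (∀ j ∈ s, c' j ∈ W) →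
      k - 1 ≤ s.card → ∃ t : Finset (Fin R), t.card = s.card ∧ ∀ r ∈ t, c r ∈ W) :
    ∃ σ : Equiv.Perm (Fin R), ∀ j, ∃ γ : ℂ, γ ≠ 0 ∧ c' j = γ • c (σ j) := by
  classical
  have hRuniv : (Finset.univ : Finset (Fin R)).card = R := by simp
  -- Step D1 : c' also has k-rank ≥ k
  have hc' : KLI c' k := by
    intro s hs
    by_contra hdep
    obtain ⟨s', hss', hs'u, hs'card⟩ :=
      Finset.exists_subsuperset_card_eq (Finset.subset_univ s) hs (by simp [hkR])
    have hdep' : ¬ LinearIndependent ℂ (fun i : s' => c' i) :=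
      fun h => hdep (li_restrict hss' h)
    obtain ⟨g, hgsum, i₀, hgne⟩ := Fintype.not_linearIndependent_iff.1 hdep'
    set g' : Fin R → ℂ := fun r => if h : r ∈ s' then g ⟨r, h⟩ else 0 with hg'
    have hg'sum : ∑ r ∈ s', g' r • c' r = 0 := by
      rw [← Finset.sum_coe_sort s' (fun r => g' r • c' r)]
      rw [← hgsum]
      refine Finset.sum_congr rfl (fun i _ => ?_)
      simp [hg', i.2]
    have hgi₀ : g' (i₀ : Fin R) ≠ 0 := by simpa [hg', i₀.2] using hgne
    set W := span ℂ (c' '' ↑(s'.erase (i₀ : Fin R))) with hW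
    have hsum2 : g' (i₀ : Fin R) • c' (i₀ : Fin R)
        + ∑ r ∈ s'.erase (i₀ : Fin R), g' r • c' r = 0 := by
      rw [add_comm, Finset.sum_erase_add _ _ i₀.2]; exact hg'sum
    have hmem₀ : c' (i₀ : Fin R) ∈ W := by
      have h5 : ∑ r ∈ s'.erase (i₀ : Fin R), g' r • c' r ∈ W :=
        Submodule.sum_mem _ (fun r hr => Submodule.smul_mem _ _
          (subset_span ⟨r, Finset.mem_coe.2 hr, rfl⟩))
      have h6 : g' (i₀ : Fin R) • c' (i₀ : Fin R)
          = -(∑ r ∈ s'.erase (i₀ : Fin R), g' r • c' r) :=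
        eq_neg_of_add_eq_zero_left hsum2
      have h7 : c' (i₀ : Fin R) = (g' (i₀ : Fin R))⁻¹ • (g' (i₀ : Fin R) • c' (i₀ : Fin R)) := by
        rw [smul_smul, inv_mul_cancel₀ hgi₀, one_smul]
      rw [h7, h6]
      exact Submodule.smul_mem _ _ (Submodule.neg_mem _ h5)
    have hin : ∀ j ∈ s', c' j ∈ W := by
      intro j hj
      by_cases hji : j = (i₀ : Fin R)
      · rw [hji]; exact hmem₀
      · exact subset_span ⟨j, by simp [Finset.mem_erase, hji, hj], rfl⟩
    obtain ⟨t, htcard, htW⟩ := hdia W s' hin (by omega)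
    have hLIt := hc t (by omega)
    have hle1 : t.card ≤ finrank ℂ W := card_le_finrank hLIt htW
    have hle2 : finrank ℂ W ≤ k - 1 := by
      refine le_trans (finrank_span_image_le _ _) ?_
      rw [Finset.card_erase_of_mem i₀.2]
      omega
    omega
  have hc'nz : ∀ j, c' j ≠ 0 := hc'.nonzero (by omega)
  -- the level descent
  have level : ∀ d : ℕ, d ≤ k - 2 → ∀ S : Finset (Fin R), S.card = k - 1 - d →
      ∃ U : Finset (Fin R), U.card = S.card ∧ span ℂ (c' '' ↑S) = span ℂ (c '' ↑U) := by
    intro d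
    induction d with
    | zero =>
      intro _ S hS
      set W := span ℂ (c' '' ↑S) with hW
      obtain ⟨t, htcard, htW⟩ := hdia W S (fun j hj => subset_span ⟨j, hj, rfl⟩) (by omega)
      have hrankW : finrank ℂ W = k - 1 := by
        rw [hW, finrank_span_image_eq (hc' S (by omega))]; omega
      have hle : span ℂ (c '' ↑t) ≤ W := by
        rw [span_le]; rintro x ⟨r, hr, rfl⟩; exact htW r hr
      have hrankt : finrank ℂ (span ℂ (c '' ↑t)) = k - 1 := by
        rw [finrank_span_image_eq (hc t (by omega))]; omega
      have heq : span ℂ (c '' ↑t) = W :=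
        Submodule.eq_of_le_of_finrank_le hle (by omega)
      exact ⟨t, by omega, heq.symm⟩
    | succ d ih =>
      intro hd S hS
      set m := S.card with hm
      have hm1 : 1 ≤ m := by omega
      have hmk : m + 2 ≤ k := by omega
      have hext : ∀ a : Fin R, a ∉ S → ∃ U : Finset (Fin R),
          U.card = m + 1 ∧ span ℂ (c' '' ↑(insert a S)) = span ℂ (c '' ↑U) := by
        intro a ha
        obtain ⟨U, hU1, hU2⟩ := ih (by omega) (insert a S)
          (by rw [Finset.card_insert_of_notMem ha]; omega)
        refine ⟨U, ?_, hU2⟩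
        have h9 : #(insert a S) = #S + 1 := Finset.card_insert_of_notMem ha
        omega
      choose Uf hUcard hUspan using hext
      set G := Finset.univ.filter (fun r => c r ∈ span ℂ (c' '' ↑S)) with hG
      have hGmem : ∀ r, r ∈ G ↔ c r ∈ span ℂ (c' '' ↑S) := by
        intro r; simp [hG]
      have hrankS : finrank ℂ (span ℂ (c' '' ↑S)) = m := by
        rw [finrank_span_image_eq (hc' S (by omega))]
      -- G has at most m elements
      have hGcard : G.card ≤ m := by
        by_contra hlt
        obtain ⟨t, htG, htcard⟩ := Finset.exists_subset_card_eq
          (show m + 1 ≤ G.card by omega)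
        have := card_le_finrank (hc t (by omega))
          (fun r hr => (hGmem r).1 (htG hr))
        omega
      -- G ⊆ each U_a
      have hGsub : ∀ a (ha : a ∉ S), G ⊆ Uf a ha := by
        intro a ha r hr
        have h1 : c r ∈ span ℂ (c '' ↑(Uf a ha)) := by
          rw [← hUspan a ha]
          exact span_mono (Set.image_mono
            (Finset.coe_subset.2 (Finset.subset_insert a S))) ((hGmem r).1 hr)
        by_contra hru
        exact not_mem_span_of_li hru (hc _ (by
          rw [Finset.card_insert_of_notMem hru, hUcard a ha]; omega)) h1
      -- intersection of two distinct U's is G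
      have hUinter : ∀ a (ha : a ∉ S) b (hb : b ∉ S), a ≠ b →
          ∀ r, r ∈ Uf a ha → r ∈ Uf b hb → r ∈ G := by
        intro a ha b hb hab r hra hrb
        have hsup : span ℂ (c' '' ↑(insert a S)) ⊔ span ℂ (c' '' ↑(insert b S))
            = span ℂ (c' '' ↑(insert a S ∪ insert b S)) := by
          rw [← Submodule.span_union, ← Set.image_union, Finset.coe_union]
        have hcarda : #(insert a S) = m + 1 := by
          have := Finset.card_insert_of_notMem ha; omega
        have hcardb : #(insert b S) = m + 1 := by
          have := Finset.card_insert_of_notMem hb; omega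
        have hcardun : (insert a S ∪ insert b S).card = m + 2 := by
          rw [show insert a S ∪ insert b S = insert a (insert b S) by
            ext x; simp [Finset.mem_union, Finset.mem_insert]; tauto]
          have h8 : #(insert a (insert b S)) = #(insert b S) + 1 :=
            Finset.card_insert_of_notMem (by simp [hab, ha])
          omega
        have hranksup : finrank ℂ ↥(span ℂ (c' '' ↑(insert a S)) ⊔
            span ℂ (c' '' ↑(insert b S))) = m + 2 := by
          rw [hsup, finrank_span_image_eq (hc' _ (by omega)), hcardun]
        have hranka : finrank ℂ (span ℂ (c' '' ↑(insert a S))) = m + 1 := by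
          rw [finrank_span_image_eq (hc' _ (by omega)), hcarda]
        have hrankb : finrank ℂ (span ℂ (c' '' ↑(insert b S))) = m + 1 := by
          rw [finrank_span_image_eq (hc' _ (by omega)), hcardb]
        have hsum := Submodule.finrank_sup_add_finrank_inf_eq
          (span ℂ (c' '' ↑(insert a S))) (span ℂ (c' '' ↑(insert b S)))
        have hrankinf : finrank ℂ ↥((span ℂ (c' '' ↑(insert a S))) ⊓
            (span ℂ (c' '' ↑(insert b S)))) = m := by omega
        have hlei : span ℂ (c' '' ↑S) ≤ (span ℂ (c' '' ↑(insert a S))) ⊓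
            (span ℂ (c' '' ↑(insert b S))) := by
          exact le_inf
            (span_mono (Set.image_mono (Finset.coe_subset.2 (Finset.subset_insert a S))))
            (span_mono (Set.image_mono (Finset.coe_subset.2 (Finset.subset_insert b S))))
        have hinfeq : span ℂ (c' '' ↑S) = (span ℂ (c' '' ↑(insert a S))) ⊓
            (span ℂ (c' '' ↑(insert b S))) :=
          Submodule.eq_of_le_of_finrank_le hlei (by omega)
        have hcr : c r ∈ span ℂ (c' '' ↑S) := by
          rw [hinfeq]
          refine Submodule.mem_inf.2 ⟨?_, ?_⟩
          · rw [hUspan a ha]; exact subset_span ⟨r, hra, rfl⟩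
          · rw [hUspan b hb]; exact subset_span ⟨r, hrb, rfl⟩
        exact (hGmem r).2 hcr
      -- counting argument forces G.card = m
      have hAcard : (Finset.univ \ S).card = R - m := by
        rw [Finset.card_sdiff_of_subset (Finset.subset_univ S), hRuniv]
      have hA2 : 2 ≤ R - m := by omega
      have hgm : G.card = m := by
        by_contra hne
        have hglt : G.card ≤ m - 1 := by omega
        -- the sets (Uf a \ G) for a ∈ univ \ S are pairwise disjoint of size m+1-g
        set F : Fin R → Finset (Fin R) := fun a =>
          if ha : a ∈ Finset.univ \ S then (Uf a (by simpa using ha)) \ G else ∅ with hF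
        have hdisj : ∀ a ∈ Finset.univ \ S, ∀ b ∈ Finset.univ \ S, a ≠ b →
            Disjoint (F a) (F b) := by
          intro a ha b hb hab
          rw [Finset.disjoint_left]
          intro r hraF hrbF
          rw [hF] at hraF hrbF
          simp only [dif_pos ha] at hraF
          simp only [dif_pos hb] at hrbF
          have h1 := Finset.mem_sdiff.1 hraF
          have h2 := Finset.mem_sdiff.1 hrbF
          exact h1.2 (hUinter a _ b _ hab r h1.1 h2.1)
        have hcardF : ∀ a ∈ Finset.univ \ S, (F a).card = m + 1 - G.card := by
          intro a ha
          rw [hF]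
          simp only [dif_pos ha]
          rw [Finset.card_sdiff_of_subset (hGsub a (by simpa using ha)), hUcard]
        have hbiun := Finset.card_biUnion hdisj
        have hsub2 : (Finset.univ \ S).biUnion F ⊆ Finset.univ \ G := by
          intro r hr
          obtain ⟨a, ha, hrF⟩ := Finset.mem_biUnion.1 hr
          rw [hF] at hrF
          simp only [dif_pos ha] at hrF
          simp [(Finset.mem_sdiff.1 hrF).2]
        have hcard2 : ((Finset.univ \ S).biUnion F).card ≤ R - G.card := by
          refine le_trans (Finset.card_le_card hsub2) ?_
          rw [Finset.card_sdiff_of_subset (Finset.subset_univ G), hRuniv]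
        rw [hbiun] at hcard2
        rw [Finset.sum_congr rfl hcardF, Finset.sum_const, hAcard, smul_eq_mul] at hcard2
        -- (R - m) * (m + 1 - g) ≤ R - g with g ≤ m - 1, 2 ≤ R - m : contradiction
        have hmR : m ≤ R :=
          le_trans (Finset.card_le_card (Finset.subset_univ S)) (le_of_eq hRuniv)
        set x := R - m with hx
        set y := m + 1 - G.card with hy
        have hy2 : 2 ≤ y := by omega
        have hxy : x * y ≤ R - G.card := hcard2
        have hRg : R - G.card ≤ x - 1 + y := by omega
        have e1 : x * y = (x - 1) * y + y := by
          have hx1 : x = (x - 1) + 1 := by omega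
          calc x * y = ((x - 1) + 1) * y := by rw [← hx1]
            _ = (x - 1) * y + y := by ring
        have h2 : (x - 1) * y ≤ x - 1 := by
          have h4 : (x - 1) * y + y ≤ x - 1 + y := le_trans (e1 ▸ hxy) hRg
          exact Nat.le_of_add_le_add_right h4
        have h3 : (x - 1) * 2 ≤ (x - 1) * y := Nat.mul_le_mul_left _ hy2
        have h5 : (x - 1) * 2 = (x - 1) + (x - 1) := by ring
        have h6 : (x - 1) + (x - 1) ≤ x - 1 := by
          rw [← h5]; exact le_trans h3 h2
        omega
      -- conclude level
      have hle : span ℂ (c '' ↑G) ≤ span ℂ (c' '' ↑S) := by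
        rw [span_le]; rintro x ⟨r, hr, rfl⟩; exact (hGmem r).1 hr
      have hrkG : finrank ℂ (span ℂ (c '' ↑G)) = m := by
        rw [finrank_span_image_eq (hc G (by omega)), hgm]
      exact ⟨G, by omega, (Submodule.eq_of_le_of_finrank_le hle (by omega)).symm⟩
  -- apply at level 1 : singletons
  have hsingle : ∀ j : Fin R, ∃ r : Fin R, ∃ γ : ℂ, γ ≠ 0 ∧ c' j = γ • c r := by
    intro j
    obtain ⟨U, hUcard, hUspan⟩ := level (k - 2) (le_refl _) {j}
      (by rw [Finset.card_singleton]; omega)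
    rw [Finset.card_singleton] at hUcard
    obtain ⟨r, rfl⟩ := Finset.card_eq_one.1 hUcard
    have h1 : c' j ∈ span ℂ (c '' ↑({r} : Finset (Fin R))) := by
      rw [← hUspan]
      exact subset_span ⟨j, by simp, rfl⟩
    rw [show ((({r} : Finset (Fin R)) : Set (Fin R))) = {r} by simp,
      Set.image_singleton] at h1
    obtain ⟨γ, hγ⟩ := Submodule.mem_span_singleton.1 h1
    refine ⟨r, γ, ?_, hγ.symm⟩
    intro h0
    exact hc'nz j (by rw [← hγ, h0, zero_smul])
  choose f γf hγne hγeq using hsingle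
  have hinj : Function.Injective f := by
    intro j j' hjj
    by_contra hne
    have h1 : c' j' = ((γf j') * (γf j)⁻¹) • c' j := by
      rw [hγeq j, hγeq j', hjj, smul_smul]
      rw [mul_assoc, inv_mul_cancel₀ (hγne j), mul_one]
    exact hc'.not_parallel hk2 hne h1
  refine ⟨Equiv.ofBijective f (Finite.injective_iff_bijective.1 hinj), fun j => ?_⟩
  exact ⟨γf j, hγne j, hγeq j⟩

end KruskalAux


namespace KruskalAux

lemma mode_match {nI nJ nK R : ℕ}
    {a a' : Fin R → Fin nI → ℂ} {b b' : Fin R → Fin nJ → ℂ} {c c' : Fin R → Fin nK → ℂ}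
    {k1 k2 k3 : ℕ}
    (ha : KLI a k1) (hb : KLI b k2) (hc : KLI c k3)
    (h1R : k1 ≤ R) (h2R : k2 ≤ R) (h3R : k3 ≤ R)
    (hsum : 2 * R + 2 ≤ k1 + k2 + k3)
    (heq : ∀ i j k, ∑ r, a r i * b r j * c r k = ∑ r, a' r i * b' r j * c' r k) :
    ∃ σ : Equiv.Perm (Fin R), ∀ j, ∃ γ : ℂ, γ ≠ 0 ∧ c' j = γ • c (σ j) := by
  classical
  have hRuniv : (Finset.univ : Finset (Fin R)).card = R := by simp
  have hk32 : 2 ≤ k3 := by omega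
  refine perm_lemma hk32 h3R hc ?_
  intro W s hsW hscard
  set S := Finset.univ.filter (fun r => c r ∉ W) with hS
  set Sh := Finset.univ.filter (fun r => c' r ∉ W) with hSh
  -- disjointness of s and Sh
  have hdisj : Disjoint s Sh := by
    rw [Finset.disjoint_left]
    intro r hrs hrSh
    exact (Finset.mem_filter.1 hrSh).2 (hsW r hrs)
  have hcards : s.card + Sh.card ≤ R := by
    calc s.card + Sh.card = (s ∪ Sh).card := (Finset.card_union_of_disjoint hdisj).symm
      _ ≤ (Finset.univ : Finset (Fin R)).card := Finset.card_le_card (Finset.subset_univ _)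
      _ = R := hRuniv
  -- generic functional
  have htargets : ∀ x ∈ (S.image c) ∪ (Sh.image c'), x ∉ W := by
    intro x hx
    rcases Finset.mem_union.1 hx with hx | hx
    · obtain ⟨r, hr, rfl⟩ := Finset.mem_image.1 hx
      exact (Finset.mem_filter.1 hr).2
    · obtain ⟨r, hr, rfl⟩ := Finset.mem_image.1 hx
      exact (Finset.mem_filter.1 hr).2
  obtain ⟨φ, hφW, hφne⟩ := exists_dual_generic W _ htargets
  -- contract the tensor equality with φ
  have hkey : ∀ i j, ∑ r ∈ S, (φ (c r)) * (a r i * b r j)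
      = ∑ m : Sh, ((φ (c' m)) * a' m i) * b' m j := by
    intro i j
    have hv : ∑ r, (a r i * b r j) • c r = ∑ r, (a' r i * b' r j) • c' r := by
      funext kk
      rw [Finset.sum_apply, Finset.sum_apply]
      simpa [mul_assoc] using heq i j kk
    have h2 := congrArg φ hv
    rw [map_sum, map_sum] at h2
    simp only [LinearMap.map_smul, smul_eq_mul] at h2
    have hL : ∑ r, (a r i * b r j) * φ (c r) = ∑ r ∈ S, (φ (c r)) * (a r i * b r j) := by
      rw [← Finset.sum_filter_of_ne (p := fun r => c r ∉ W)]
      · exact Finset.sum_congr rfl (fun r _ => by ring)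
      · intro r _ hne hcr
        exact hne (by rw [hφW _ hcr, mul_zero])
    have hR2 : ∑ r, (a' r i * b' r j) * φ (c' r)
        = ∑ m : Sh, ((φ (c' m)) * a' m i) * b' m j := by
      rw [Finset.sum_coe_sort Sh (fun r => ((φ (c' r)) * a' r i) * b' r j)]
      rw [← Finset.sum_filter_of_ne (p := fun r => c' r ∉ W)]
      · exact Finset.sum_congr rfl (fun r _ => by ring)
      · intro r _ hne hcr
        exact hne (by rw [hφW _ hcr, mul_zero])
    rw [← hL, ← hR2]
    exact h2
  have hlam : ∀ r ∈ S, φ (c r) ≠ 0 := by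
    intro r hr
    exact hφne _ (Finset.mem_union_left _ (Finset.mem_image_of_mem c hr))
  have hGC := GCcard hlam hkey (show 1 ≤ k1 by omega)
    (fun t ht => ha t (le_trans ht (le_refl k1)))
    (fun t ht => hb t (le_trans ht (le_refl k2)))
  rw [Fintype.card_coe] at hGC
  -- arithmetic : S.card ≤ Sh.card
  have hScard : S.card ≤ R := le_trans (Finset.card_le_card (Finset.subset_univ _))
    (le_of_eq hRuniv)
  have hSSh : S.card ≤ Sh.card := by
    rcases le_total k2 S.card with h | h
    · rw [min_eq_left h] at hGC; omega
    · rw [min_eq_right h] at hGC; omega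
  -- now exhibit t
  have hcW : (Finset.univ.filter (fun r => c r ∈ W)).card = R - S.card := by
    have := Finset.card_filter_add_card_filter_not
      (s := (Finset.univ : Finset (Fin R))) (p := fun r => c r ∈ W)
    simp only [hRuniv] at this
    rw [hS]
    omega
  obtain ⟨t, htsub, htcard⟩ := Finset.exists_subset_card_eq
    (show s.card ≤ (Finset.univ.filter (fun r => c r ∈ W)).card by omega)
  exact ⟨t, htcard, fun r hr => (Finset.mem_filter.1 (htsub hr)).2⟩

end KruskalAux


namespace KruskalAux

lemma final_id {nI nJ nK R : ℕ}
    {a : Fin R → Fin nI → ℂ} {b : Fin R → Fin nJ → ℂ} {c : Fin R → Fin nK → ℂ}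
    {k1 k2 k3 : ℕ}
    (ha : KLI a k1) (hb : KLI b k2) (hc : KLI c k3)
    (h1R : k1 ≤ R) (h2R : k2 ≤ R) (h3R : k3 ≤ R)
    (hsum : 2 * R + 2 ≤ k1 + k2 + k3)
    (κ ρ : Equiv.Perm (Fin R)) (ν : Fin R → ℂ) (hν : ∀ p, ν p ≠ 0)
    (heq : ∀ i j k, ∑ r, a r i * b r j * c r k
      = ∑ r, ν r * (a r i * (b (κ r) j * c (ρ r) k))) :
    ∀ p, κ p = p ∧ ρ p = p ∧ ν p = 1 := by
  classical
  have hk12 : 2 ≤ k1 := by omega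
  have hk22 : 2 ≤ k2 := by omega
  have hk32 : 2 ≤ k3 := by omega
  have hRuniv : (Finset.univ : Finset (Fin R)).card = R := by simp
  set M : Fin R → (Fin nJ → Fin nK → ℂ) := fun p =>
    (fun j k => b p j * c p k - ν p * (b (κ p) j * c (ρ p) k)) with hM
  -- main claim : all M p = 0
  have hMzero : ∀ p, M p = 0 := by
    set S := Finset.univ.filter (fun p => M p ≠ 0) with hS
    set n := S.card with hn
    have hnR : n ≤ R := le_trans (Finset.card_le_card (Finset.subset_univ _))
      (le_of_eq hRuniv)
    suffices hSempty : ∀ p ∈ S, False by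
      intro p
      by_contra hp
      exact hSempty p (Finset.mem_filter.2 ⟨Finset.mem_univ p, hp⟩)
    intro p₀ hp₀
    set qh := ρ.symm p₀ with hqh
    obtain ⟨T, hTsub, hTcard⟩ := Finset.exists_subset_card_eq
      (show n - k1 ≤ (S \ ({p₀, qh} : Finset (Fin R))).card by
        have h2 := Finset.le_card_sdiff ({p₀, qh} : Finset (Fin R)) S
        have h3 : ({p₀, qh} : Finset (Fin R)).card ≤ 2 := Finset.card_insert_le _ _
        omega)
    have hTS : T ⊆ S := fun x hx => (Finset.mem_sdiff.1 (hTsub hx)).1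
    have hTnotp₀ : p₀ ∉ T := fun hx => (Finset.mem_sdiff.1 (hTsub hx)).2 (by simp)
    have hTnotqh : qh ∉ T := fun hx => (Finset.mem_sdiff.1 (hTsub hx)).2 (by simp)
    have hSTcard : (S \ T).card ≤ k1 := by
      rw [Finset.card_sdiff_of_subset hTS, hTcard]; omega
    have hTcard2 : T.card ≤ R - k1 := by omega
    -- functional equation
    have hfun : ∀ ψ : Module.Dual ℂ (Fin nJ → Fin nK → ℂ), ∀ i,
        ∑ p ∈ S, ψ (M p) * a p i = ∑ m : Fin 0, ψ ((fun _ => 0 : Fin 0 → _) m)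
          * (fun _ => (0 : Fin nI → ℂ)) m i := by
      intro ψ i
      rw [Fin.sum_univ_zero]
      have hTot : ∑ p, (a p i) • M p = 0 := by
        funext j kk
        have h5 : ∀ p, ((a p i) • M p) j kk
            = a p i * b p j * c p kk - ν p * (a p i * (b (κ p) j * c (ρ p) kk)) := by
          intro p
          simp only [hM, Pi.smul_apply, smul_eq_mul]
          ring
        have h6 : (∑ p, (a p i) • M p) j kk = ∑ p, ((a p i) • M p) j kk := by
          rw [Finset.sum_apply, Finset.sum_apply]
        have h7 : ((0 : Fin nJ → Fin nK → ℂ)) j kk = 0 := rfl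
        rw [h6, h7]
        calc ∑ p, ((a p i) • M p) j kk
            = ∑ p, (a p i * b p j * c p kk
              - ν p * (a p i * (b (κ p) j * c (ρ p) kk))) :=
              Finset.sum_congr rfl (fun p _ => h5 p)
          _ = ∑ p, a p i * b p j * c p kk
              - ∑ p, ν p * (a p i * (b (κ p) j * c (ρ p) kk)) :=
              Finset.sum_sub_distrib _ _
          _ = 0 := sub_eq_zero.2 (heq i j kk)
      have h6 := congrArg ψ hTot
      rw [map_sum, map_zero] at h6
      simp only [LinearMap.map_smul, smul_eq_mul] at h6
      have h8 : ∑ p ∈ S, ψ (M p) * a p i = ∑ p, a p i * ψ (M p) := by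
        rw [hS, Finset.sum_filter]
        refine Finset.sum_congr rfl (fun p _ => ?_)
        by_cases hMp : M p ≠ 0
        · rw [if_pos hMp]; ring
        · rw [if_neg hMp]
          rw [not_not] at hMp
          rw [hMp, map_zero, mul_zero]
      rw [h8, h6]
    have hcont := span_contain hTS (ha _ hSTcard) hfun p₀ hp₀
    -- build the separating functional
    set Kb : Finset (Fin R) := if κ p₀ = p₀ then T else insert (κ p₀) T with hKb
    set Kc : Finset (Fin R) := if κ p₀ = p₀ ∧ ρ p₀ ≠ p₀ then insert (ρ p₀) (T.image ρ)
      else T.image ρ with hKc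
    have hKbT : T ⊆ Kb := by
      rw [hKb]; split <;> simp [Finset.subset_insert]
    have hKcT : T.image ρ ⊆ Kc := by
      rw [hKc]; split <;> simp [Finset.subset_insert]
    have hKbcard : Kb.card ≤ R - k1 + 1 := by
      rw [hKb]
      split
      · omega
      · exact le_trans (Finset.card_insert_le _ _) (by omega)
    have hKccard : Kc.card ≤ R - k1 + 1 := by
      have him : (T.image ρ).card ≤ R - k1 := le_trans Finset.card_image_le hTcard2
      rw [hKc]
      split
      · exact le_trans (Finset.card_insert_le _ _) (by omega)
      · omega
    have hp₀Kb : p₀ ∉ Kb := by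
      rw [hKb]
      split
      · exact hTnotp₀
      · intro hx
        rcases Finset.mem_insert.1 hx with h | h
        · exact ‹¬ κ p₀ = p₀› h.symm
        · exact hTnotp₀ h
    have hp₀Kc : p₀ ∉ Kc := by
      have himn : p₀ ∉ T.image ρ := by
        intro hx
        obtain ⟨q, hq, hq2⟩ := Finset.mem_image.1 hx
        have hqe : q = qh := by rw [hqh, ← hq2, Equiv.symm_apply_apply]
        exact hTnotqh (hqe ▸ hq)
      rw [hKc]
      split
      · rename_i hcase
        intro hx
        rcases Finset.mem_insert.1 hx with h | h
        · exact hcase.2 h.symm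
        · exact himn h
      · exact himn
    have hbmem : b p₀ ∉ span ℂ (b '' ↑Kb) := by
      apply not_mem_span_of_li hp₀Kb
      apply hb
      rw [Finset.card_insert_of_notMem hp₀Kb]
      omega
    have hcmem : c p₀ ∉ span ℂ (c '' ↑Kc) := by
      apply not_mem_span_of_li hp₀Kc
      apply hc
      rw [Finset.card_insert_of_notMem hp₀Kc]
      omega
    obtain ⟨φ, hφW, hφne⟩ := exists_dual_generic (span ℂ (b '' ↑Kb)) {b p₀}
      (by intro x hx; rw [Finset.mem_singleton.1 hx]; exact hbmem)
    obtain ⟨ξ, hξW, hξne⟩ := exists_dual_generic (span ℂ (c '' ↑Kc)) {c p₀}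
      (by intro x hx; rw [Finset.mem_singleton.1 hx]; exact hcmem)
    have hφb : ∀ q ∈ Kb, φ (b q) = 0 :=
      fun q hq => hφW _ (subset_span ⟨q, hq, rfl⟩)
    have hξc : ∀ q ∈ Kc, ξ (c q) = 0 :=
      fun q hq => hξW _ (subset_span ⟨q, hq, rfl⟩)
    have hφb₀ : φ (b p₀) ≠ 0 := hφne _ (Finset.mem_singleton_self _)
    have hξc₀ : ξ (c p₀) ≠ 0 := hξne _ (Finset.mem_singleton_self _)
    set Ξ : Module.Dual ℂ (Fin nJ → Fin nK → ℂ) :=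
      φ.comp (LinearMap.compLeft ξ (Fin nJ)) with hΞdef
    have hΞ : ∀ p, Ξ (M p) = ξ (c p) * φ (b p)
        - ν p * (ξ (c (ρ p)) * φ (b (κ p))) := by
      intro p
      have h1 : (LinearMap.compLeft ξ (Fin nJ)) (M p)
          = (ξ (c p)) • b p - (ν p * ξ (c (ρ p))) • b (κ p) := by
        funext j
        have h2 : M p j = (b p j) • c p - (ν p * b (κ p) j) • c (ρ p) := by
          funext kk
          rw [hM]
          simp only [Pi.smul_apply, Pi.sub_apply, smul_eq_mul]
          ring
        show ξ (M p j) = _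
        rw [h2, map_sub, LinearMap.map_smul, LinearMap.map_smul]
        simp only [Pi.sub_apply, Pi.smul_apply, smul_eq_mul]
        ring
      rw [hΞdef]
      show φ ((LinearMap.compLeft ξ (Fin nJ)) (M p)) = _
      rw [h1, map_sub, LinearMap.map_smul, LinearMap.map_smul]
      simp only [smul_eq_mul]
      ring
    -- Ξ kills all M q for q ∈ T
    have hkill : ∀ q ∈ T, Ξ (M q) = 0 := by
      intro q hq
      rw [hΞ q, hφb q (hKbT hq), hξc (ρ q) (hKcT (Finset.mem_image_of_mem ρ hq))]
      ring
    -- hence Ξ (M p₀) = 0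
    have hΞ0 : Ξ (M p₀) = 0 := by
      have hle : span ℂ (M '' ↑T ∪ Set.range (fun _ => 0 : Fin 0 → Fin nJ → Fin nK → ℂ))
          ≤ LinearMap.ker Ξ := by
        rw [span_le]
        rintro x (⟨q, hq, rfl⟩ | ⟨m, rfl⟩)
        · exact LinearMap.mem_ker.2 (hkill q hq)
        · exact Fin.elim0 m
      exact LinearMap.mem_ker.1 (hle hcont)
    -- but Ξ (M p₀) ≠ 0
    have hMp₀ : M p₀ ≠ 0 := (Finset.mem_filter.1 hp₀).2
    by_cases hκ : κ p₀ = p₀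
    · by_cases hρ : ρ p₀ = p₀
      · -- both fixed : ν p₀ ≠ 1
        have hν1 : ν p₀ ≠ 1 := by
          intro h1
          apply hMp₀
          funext j kk
          rw [hM]
          simp only [hκ, hρ, h1, Pi.zero_apply]
          ring
        rw [hΞ p₀, hκ, hρ] at hΞ0
        have : (1 - ν p₀) * (ξ (c p₀) * φ (b p₀)) = 0 := by linear_combination hΞ0
        rcases mul_eq_zero.1 this with h | h
        · exact hν1 (by linear_combination -h)
        · rcases mul_eq_zero.1 h with h | h
          · exact hξc₀ h
          · exact hφb₀ h
      · -- κ fixed, ρ not : ρ p₀ ∈ Kc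
        have hρKc : ρ p₀ ∈ Kc := by
          rw [hKc, if_pos ⟨hκ, hρ⟩]
          exact Finset.mem_insert_self _ _
        rw [hΞ p₀, hξc _ hρKc] at hΞ0
        simp only [mul_zero, zero_mul, sub_zero] at hΞ0
        rcases mul_eq_zero.1 hΞ0 with h | h
        · exact hξc₀ h
        · exact hφb₀ h
    · -- κ p₀ ≠ p₀ : κ p₀ ∈ Kb
      have hκKb : κ p₀ ∈ Kb := by
        rw [hKb, if_neg hκ]
        exact Finset.mem_insert_self _ _
      rw [hΞ p₀, hφb _ hκKb] at hΞ0
      simp only [mul_zero, sub_zero] at hΞ0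
      rcases mul_eq_zero.1 hΞ0 with h | h
      · exact hξc₀ h
      · exact hφb₀ h
  -- extract the conclusion from M p = 0
  intro p
  have hMp := hMzero p
  have hbnz := hb.nonzero (by omega) p
  have hcnz := hc.nonzero (by omega) p
  obtain ⟨j₀, hj₀⟩ := Function.ne_iff.1 hbnz
  obtain ⟨k₀, hk₀⟩ := Function.ne_iff.1 hcnz
  simp only [Pi.zero_apply] at hj₀ hk₀
  have hEq : ∀ j kk, b p j * c p kk = ν p * (b (κ p) j * c (ρ p) kk) := by
    intro j kk
    have h7 : b p j * c p kk - ν p * (b (κ p) j * c (ρ p) kk) = 0 :=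
      congrFun (congrFun hMp j) kk
    linear_combination h7
  have hρp : ρ p = p := by
    by_contra hne
    have hpar : c p = ((ν p * b (κ p) j₀) / (b p j₀)) • c (ρ p) := by
      funext kk
      have h8 := hEq j₀ kk
      simp only [Pi.smul_apply, smul_eq_mul]
      field_simp
      linear_combination h8
    exact hc.not_parallel hk32 hne hpar
  have hκp : κ p = p := by
    by_contra hne
    have hpar : b p = ((ν p * c (ρ p) k₀) / (c p k₀)) • b (κ p) := by
      funext j
      have h8 := hEq j k₀
      simp only [Pi.smul_apply, smul_eq_mul]
      field_simp
      linear_combination h8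
    exact hb.not_parallel hk22 hne hpar
  refine ⟨hκp, hρp, ?_⟩
  have h9 := hEq j₀ k₀
  rw [hκp, hρp] at h9
  have h10 : (1 - ν p) * (b p j₀ * c p k₀) = 0 := by linear_combination h9
  rcases mul_eq_zero.1 h10 with h | h
  · linear_combination -h
  · rcases mul_eq_zero.1 h with h | h
    · exact absurd h hj₀
    · exact absurd h hk₀

end KruskalAux


namespace KruskalAux

lemma kruskalRank_mem {m n : ℕ} (A : Matrix (Fin m) (Fin n) ℂ) :
    kruskalRank A ≤ n ∧ ∀ s : Finset (Fin n), s.card = kruskalRank A →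
      LinearIndependent ℂ (fun i : s => fun p => A p (i : Fin n)) := by
  have hne : {k | k ≤ n ∧ ∀ s : Finset (Fin n), s.card = k →
      LinearIndependent ℂ (fun i : s => fun p => A p (i : Fin n))}.Nonempty := by
    refine ⟨0, Nat.zero_le n, ?_⟩
    intro s hs
    rw [Finset.card_eq_zero] at hs
    subst hs
    haveI : IsEmpty ((∅ : Finset (Fin n)) : Type) := by
      simp only [Finset.isEmpty_coe_sort]
    exact linearIndependent_empty_type
  have hbdd : BddAbove {k | k ≤ n ∧ ∀ s : Finset (Fin n), s.card = k →
      LinearIndependent ℂ (fun i : s => fun p => A p (i : Fin n))} :=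
    ⟨n, fun k hk => hk.1⟩
  exact Nat.sSup_mem hne hbdd

lemma kruskalRank_le {m n : ℕ} (A : Matrix (Fin m) (Fin n) ℂ) : kruskalRank A ≤ n :=
  (kruskalRank_mem A).1

lemma kruskalRank_KLI {m n : ℕ} (A : Matrix (Fin m) (Fin n) ℂ) :
    KLI (fun r (p : Fin m) => A p r) (kruskalRank A) := by
  intro s hs
  obtain ⟨hle, hall⟩ := kruskalRank_mem A
  have hle2 : kruskalRank A ≤ (Finset.univ : Finset (Fin n)).card := by
    rw [Finset.card_univ, Fintype.card_fin]; exact hle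
  obtain ⟨t, hst, htu, htc⟩ :=
    Finset.exists_subsuperset_card_eq (Finset.subset_univ s) hs hle2
  exact li_restrict (v := fun r (p : Fin m) => A p r) hst (hall t htc)

end KruskalAux


open KruskalAux

/-- Kruskal's uniqueness theorem: if `k_{A¹} + k_{A²} + k_{A³} ≥ 2R + 2`, then the
rank-`R` CP decomposition is unique up to a common column permutation and column
scalings multiplying to one. -/
theorem kruskal_uniqueness {I J K R : ℕ}
    (A₁ : Matrix (Fin I) (Fin R) ℂ) (A₂ : Matrix (Fin J) (Fin R) ℂ)
    (A₃ : Matrix (Fin K) (Fin R) ℂ)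
    (hk : kruskalRank A₁ + kruskalRank A₂ + kruskalRank A₃ ≥ 2 * R + 2) :
    ∀ (B₁ : Matrix (Fin I) (Fin R) ℂ) (B₂ : Matrix (Fin J) (Fin R) ℂ)
      (B₃ : Matrix (Fin K) (Fin R) ℂ),
      (∀ i j k, (∑ r, A₁ i r * A₂ j r * A₃ k r) = ∑ r, B₁ i r * B₂ j r * B₃ k r) →
      ∃ (σ : Equiv.Perm (Fin R)) (d₁ d₂ d₃ : Fin R → ℂ),
        (∀ r, d₁ r * d₂ r * d₃ r = 1) ∧
        (∀ i r, B₁ i r = d₁ r * A₁ i (σ r)) ∧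
        (∀ j r, B₂ j r = d₂ r * A₂ j (σ r)) ∧
        (∀ k r, B₃ k r = d₃ r * A₃ k (σ r)) := by
  intro B₁ B₂ B₃ heq
  classical
  have ha := kruskalRank_KLI A₁
  have hb := kruskalRank_KLI A₂
  have hc := kruskalRank_KLI A₃
  have h1R := kruskalRank_le A₁
  have h2R := kruskalRank_le A₂
  have h3R := kruskalRank_le A₃
  have hsum : 2 * R + 2 ≤ kruskalRank A₁ + kruskalRank A₂ + kruskalRank A₃ := hk
  -- mode 3 matching
  obtain ⟨σ₃, hσ₃⟩ := mode_match (a := fun r i => A₁ i r) (a' := fun r i => B₁ i r)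
    (b := fun r j => A₂ j r) (b' := fun r j => B₂ j r)
    (c := fun r k => A₃ k r) (c' := fun r k => B₃ k r)
    ha hb hc h1R h2R h3R hsum (fun i j k => heq i j k)
  -- mode 1 matching (rotate roles)
  have heq1 : ∀ (j : Fin J) (k : Fin K) (i : Fin I),
      ∑ r, A₂ j r * A₃ k r * A₁ i r = ∑ r, B₂ j r * B₃ k r * B₁ i r := by
    intro j k i
    calc ∑ r, A₂ j r * A₃ k r * A₁ i r = ∑ r, A₁ i r * A₂ j r * A₃ k r :=
          Finset.sum_congr rfl (fun r _ => by ring)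
      _ = ∑ r, B₁ i r * B₂ j r * B₃ k r := heq i j k
      _ = ∑ r, B₂ j r * B₃ k r * B₁ i r := Finset.sum_congr rfl (fun r _ => by ring)
  obtain ⟨σ₁, hσ₁⟩ := mode_match (a := fun r j => A₂ j r) (a' := fun r j => B₂ j r)
    (b := fun r k => A₃ k r) (b' := fun r k => B₃ k r)
    (c := fun r i => A₁ i r) (c' := fun r i => B₁ i r)
    hb hc ha h2R h3R h1R (by omega) (fun j k i => heq1 j k i)
  -- mode 2 matching
  have heq2 : ∀ (k : Fin K) (i : Fin I) (j : Fin J),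
      ∑ r, A₃ k r * A₁ i r * A₂ j r = ∑ r, B₃ k r * B₁ i r * B₂ j r := by
    intro k i j
    calc ∑ r, A₃ k r * A₁ i r * A₂ j r = ∑ r, A₁ i r * A₂ j r * A₃ k r :=
          Finset.sum_congr rfl (fun r _ => by ring)
      _ = ∑ r, B₁ i r * B₂ j r * B₃ k r := heq i j k
      _ = ∑ r, B₃ k r * B₁ i r * B₂ j r := Finset.sum_congr rfl (fun r _ => by ring)
  obtain ⟨σ₂, hσ₂⟩ := mode_match (a := fun r k => A₃ k r) (a' := fun r k => B₃ k r)
    (b := fun r i => A₁ i r) (b' := fun r i => B₁ i r)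
    (c := fun r j => A₂ j r) (c' := fun r j => B₂ j r)
    hc ha hb h3R h1R h2R (by omega) (fun k i j => heq2 k i j)
  choose γ1 hγ1ne hγ1eq using hσ₁
  choose γ2 hγ2ne hγ2eq using hσ₂
  choose γ3 hγ3ne hγ3eq using hσ₃
  have h1 : ∀ i r, B₁ i r = γ1 r * A₁ i (σ₁ r) := by
    intro i r
    have := congrFun (hγ1eq r) i
    simpa using this
  have h2 : ∀ j r, B₂ j r = γ2 r * A₂ j (σ₂ r) := by
    intro j r
    have := congrFun (hγ2eq r) j
    simpa using this
  have h3 : ∀ k r, B₃ k r = γ3 r * A₃ k (σ₃ r) := by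
    intro k r
    have := congrFun (hγ3eq r) k
    simpa using this
  set κ : Equiv.Perm (Fin R) := σ₁.symm.trans σ₂ with hκdef
  set ρ : Equiv.Perm (Fin R) := σ₁.symm.trans σ₃ with hρdef
  set ν : Fin R → ℂ := fun p => γ1 (σ₁.symm p) * γ2 (σ₁.symm p) * γ3 (σ₁.symm p) with hνdef
  have hνne : ∀ p, ν p ≠ 0 := fun p =>
    mul_ne_zero (mul_ne_zero (hγ1ne _) (hγ2ne _)) (hγ3ne _)
  have hstep : ∀ i j k, ∑ p, ν p * (A₁ i p * (A₂ j (κ p) * A₃ k (ρ p)))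
      = ∑ r, B₁ i r * B₂ j r * B₃ k r := by
    intro i j k
    rw [← Equiv.sum_comp σ₁ (fun p => ν p * (A₁ i p * (A₂ j (κ p) * A₃ k (ρ p))))]
    refine Finset.sum_congr rfl (fun r _ => ?_)
    have e1 : σ₁.symm (σ₁ r) = r := Equiv.symm_apply_apply σ₁ r
    have eκ : κ (σ₁ r) = σ₂ r := by rw [hκdef]; simp [Equiv.trans_apply, e1]
    have eρ : ρ (σ₁ r) = σ₃ r := by rw [hρdef]; simp [Equiv.trans_apply, e1]
    have eν : ν (σ₁ r) = γ1 r * γ2 r * γ3 r := by rw [hνdef]; simp [e1]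
    rw [eκ, eρ, eν, h1 i r, h2 j r, h3 k r]
    ring
  have heqF : ∀ i j k, ∑ r, A₁ i r * A₂ j r * A₃ k r
      = ∑ p, ν p * (A₁ i p * (A₂ j (κ p) * A₃ k (ρ p))) :=
    fun i j k => (heq i j k).trans (hstep i j k).symm
  have hfin := final_id (a := fun r i => A₁ i r) (b := fun r j => A₂ j r)
    (c := fun r k => A₃ k r) ha hb hc h1R h2R h3R hsum κ ρ ν hνne
    (fun i j k => heqF i j k)
  have hσ21 : ∀ r, σ₂ r = σ₁ r := by
    intro r
    have := (hfin (σ₁ r)).1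
    rw [hκdef] at this
    simpa [Equiv.trans_apply] using this
  have hσ31 : ∀ r, σ₃ r = σ₁ r := by
    intro r
    have := (hfin (σ₁ r)).2.1
    rw [hρdef] at this
    simpa [Equiv.trans_apply] using this
  have hν1 : ∀ r, γ1 r * γ2 r * γ3 r = 1 := by
    intro r
    have := (hfin (σ₁ r)).2.2
    rw [hνdef] at this
    simpa [Equiv.symm_apply_apply] using this
  refine ⟨σ₁, γ1, γ2, γ3, hν1, h1, ?_, ?_⟩
  · intro j r
    rw [h2 j r, hσ21 r]
  · intro k r
    rw [h3 k r, hσ31 r]
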